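/- arXiv:0812.0033 — 3 statements merged into one kernel-verified Lean document; each statement's English description precedes it below -/
import Mathlib

section
/- Let $(X_k)_{k \in \mathbb{N}}$ and $(Y_k)_{k \in \mathbb{N}}$ be sequences of positive random variables, both bounded in probability, and let $U:(0,\infty) \to \mathbb{R}$ be strictly concave. Suppose there is a constant $u^* \in \mathbb{R}$ with $\mathbb{E}[U((X_k + Y_k)/2)] \leq u^*$ for all $k$, and $\lim_{k\to\infty} \mathbb{E}[U(X_k)] = \lim_{k\to\infty} \mathbb{E}[U(Y_k)] = u^*$. If moreover $(1/X_k)_k$ and $(1/Y_k)_k$ are bounded in probability, then $|X_k - Y_k| \to 0$ in probability. -/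
open MeasureTheory Filter Set
open scoped Topology ENNReal

noncomputable section

/-- Uniform convergence on compact time intervals, in probability (ucp). -/
def UcpTendsto {Ω ι : Type*} [MeasurableSpace Ω] (μ : Measure Ω) (l : Filter ι)
    (F : ι → ℝ → Ω → ℝ) (G : ℝ → Ω → ℝ) : Prop :=
  ∀ T : ℝ, TendstoInMeasure μ
    (fun n ω => ⨆ t ∈ Icc (0 : ℝ) T, |F n t ω - G t ω|) l (fun _ => (0 : ℝ))

/-- All paths are right-continuous. -/
def RightCont {Ω : Type*} (X : ℝ → Ω → ℝ) : Prop :=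
  ∀ ω t, ContinuousWithinAt (fun s => X s ω) (Ici t) t

/-- `Xm` is the process of left limits of `X`. -/
def HasLeftLimits {Ω : Type*} (X Xm : ℝ → Ω → ℝ) : Prop :=
  ∀ ω t, Tendsto (fun s => X s ω) (𝓝[<] t) (𝓝 (Xm t ω))

/-- Local martingale: there is a localizing sequence of stopping times. -/
def IsLocalMartingale {Ω : Type*} {m0 : MeasurableSpace Ω} (ℱ : Filtration ℝ m0)
    (μ : Measure Ω) (M : ℝ → Ω → ℝ) : Prop :=
  ∃ τ : ℕ → Ω → ℝ, (∀ n, IsStoppingTime ℱ (fun ω => ((τ n ω : ℝ) : WithTop ℝ))) ∧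
    (∀ ω, Tendsto (fun n => τ n ω) atTop atTop) ∧
    ∀ n, Martingale (fun t ω => M (min t (τ n ω)) ω) ℱ μ

/-- Semimartingale: adapted càdlàg process that is the sum of a local martingale and an
adapted process of finite variation on compacts. -/
def IsSemimartingale {Ω : Type*} {m0 : MeasurableSpace Ω} (ℱ : Filtration ℝ m0)
    (μ : Measure Ω) (X : ℝ → Ω → ℝ) : Prop :=
  Adapted ℱ X ∧ RightCont X ∧ (∃ Xm, HasLeftLimits X Xm) ∧
    ∃ M A : ℝ → Ω → ℝ, IsLocalMartingale ℱ μ M ∧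
      (∀ ω a b, BoundedVariationOn (fun s => A s ω) (Icc a b)) ∧
      ∀ t ω, X t ω = X 0 ω + M t ω + A t ω

/-- Discrete quadratic-variation sums along the dyadic partition of mesh `2⁻ⁿ` of `[0, n]`,
stopped at time `t`. -/
def qvApprox {Ω : Type*} (X : ℝ → Ω → ℝ) (n : ℕ) (t : ℝ) (ω : Ω) : ℝ :=
  ∑ j ∈ Finset.range (n * 2 ^ n),
    (X (min (((j : ℝ) + 1) / 2 ^ n) t) ω - X (min ((j : ℝ) / 2 ^ n) t) ω) ^ 2

/-- `Q` is (a version of) the quadratic variation `[X, X]` (without the initial square). -/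
def IsQuadVar {Ω : Type*} [MeasurableSpace Ω] (μ : Measure Ω) (X Q : ℝ → Ω → ℝ) : Prop :=
  UcpTendsto μ atTop (fun n => qvApprox X n) Q

/-- Riemann sums of the (right limit of the) integrand `ηp` against `S` along dyadic
partitions, stopped at `t`. -/
def riemannApprox {Ω : Type*} (ηp S : ℝ → Ω → ℝ) (n : ℕ) (t : ℝ) (ω : Ω) : ℝ :=
  ∑ j ∈ Finset.range (n * 2 ^ n),
    ηp ((j : ℝ) / 2 ^ n) ω *
      (S (min (((j : ℝ) + 1) / 2 ^ n) t) ω - S (min ((j : ℝ) / 2 ^ n) t) ω)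

/-- `I` is (a version of) the Itô stochastic integral `∫₀· η dS`, characterized as the ucp
limit of Riemann sums along deterministic dyadic partitions; here `ηp` is the process of
right limits of the càglàd integrand `η`. -/
def IsStochInt {Ω : Type*} [MeasurableSpace Ω] (μ : Measure Ω) (ηp S I : ℝ → Ω → ℝ) : Prop :=
  UcpTendsto μ atTop (fun n => riemannApprox ηp S n) I

/-- Sum of `g` over the (at most countably many nontrivial) times in `(0, t]`. -/
def jumpSum {Ω : Type*} (g : ℝ → Ω → ℝ) (t : ℝ) (ω : Ω) : ℝ :=
  ∑' s : Ioc (0 : ℝ) t, g (s : ℝ) ω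

/-- The Doléans-Dade stochastic exponential of a semimartingale `Y` (with `Y₀ = 0`,
left limits `Ym` and quadratic variation `Q`), expressed through the closed-form formula
`ℰ(Y) = exp(Y - ½[Y,Y]ᶜ - Σ_{s≤·} (ΔY_s - log(1+ΔY_s)))`, valid when `ΔY > -1`. -/
def stochExp {Ω : Type*} (Y Ym Q : ℝ → Ω → ℝ) (t : ℝ) (ω : Ω) : ℝ :=
  Real.exp (Y t ω
    - (1 / 2) * (Q t ω - jumpSum (fun s ω' => (Y s ω' - Ym s ω') ^ 2) t ω)
    - jumpSum (fun s ω' => (Y s ω' - Ym s ω') - Real.log (1 + (Y s ω' - Ym s ω'))) t ω)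

end

/-- A sequence of real random variables is bounded in probability. -/
def BddInProb {Ω : Type*} [MeasurableSpace Ω] (μ : Measure Ω) (X : ℕ → Ω → ℝ) : Prop :=
  ∀ δ : ℝ, 0 < δ → ∃ M : ℝ, ∀ k, (μ {ω | M < |X k ω|}).toReal ≤ δ

lemma mid_le_of_concave {U : ℝ → ℝ} (hU : ConcaveOn ℝ (Ioi (0:ℝ)) U) {x y : ℝ}
    (hx : 0 < x) (hy : 0 < y) : (U x + U y) / 2 ≤ U ((x + y) / 2) := by
  have h := hU.2 (mem_Ioi.2 hx) (mem_Ioi.2 hy) (by norm_num : (0:ℝ) ≤ 1/2)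
    (by norm_num : (0:ℝ) ≤ 1/2) (by norm_num)
  simp only [smul_eq_mul] at h
  have e1 : (1/2:ℝ) * x + (1/2) * y = (x + y) / 2 := by ring
  rw [e1] at h
  linarith

lemma gap_aux {U : ℝ → ℝ} (hU : StrictConcaveOn ℝ (Ioi (0:ℝ)) U) {a b ε : ℝ}
    (ha : 0 < a) (hε : 0 < ε) :
    ∃ η : ℝ, 0 < η ∧ ∀ x y : ℝ, x ∈ Icc a b → y ∈ Icc a b → ε ≤ |x - y| →
      (U x + U y) / 2 + η ≤ U ((x + y) / 2) := by
  set S : Set (ℝ × ℝ) := (Icc a b ×ˢ Icc a b) ∩ {p | ε ≤ |p.1 - p.2|} with hSdef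
  have hScomp : IsCompact S := (isCompact_Icc.prod isCompact_Icc).inter_right
    (isClosed_le continuous_const ((continuous_fst.sub continuous_snd).abs))
  have hUc : ContinuousOn U (Ioi (0:ℝ)) := hU.concaveOn.continuousOn isOpen_Ioi
  have hmem : ∀ p ∈ S, p.1 ∈ Ioi (0:ℝ) ∧ p.2 ∈ Ioi (0:ℝ) ∧ (p.1 + p.2)/2 ∈ Ioi (0:ℝ) := by
    rintro ⟨x, y⟩ ⟨⟨hx, hy⟩, -⟩
    have h1 : 0 < x := lt_of_lt_of_le ha hx.1
    have h2 : 0 < y := lt_of_lt_of_le ha hy.1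
    exact ⟨h1, h2, by simp; linarith⟩
  set g : ℝ × ℝ → ℝ := fun p => U ((p.1 + p.2)/2) - (U p.1 + U p.2)/2 with hgdef
  have hgc : ContinuousOn g S := by
    apply ContinuousOn.sub
    · exact hUc.comp (by fun_prop) (fun p hp => (hmem p hp).2.2)
    · exact ContinuousOn.div_const (ContinuousOn.add
        (hUc.comp continuousOn_fst (fun p hp => (hmem p hp).1))
        (hUc.comp continuousOn_snd (fun p hp => (hmem p hp).2.1))) 2
  rcases S.eq_empty_or_nonempty with hS | hS
  · refine ⟨1, one_pos, fun x y hx hy hxy => ?_⟩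
    have : (x, y) ∈ S := ⟨⟨hx, hy⟩, hxy⟩
    rw [hS] at this
    exact absurd this (notMem_empty _)
  · obtain ⟨p0, hp0S, hmin⟩ := hScomp.exists_isMinOn hS hgc
    refine ⟨g p0, ?_, fun x y hx hy hxy => ?_⟩
    · obtain ⟨h1, h2, -⟩ := hmem p0 hp0S
      have hne : p0.1 ≠ p0.2 := by
        intro h
        have : ε ≤ |p0.1 - p0.2| := hp0S.2
        rw [h] at this; simp at this; linarith
      have h := hU.2 h1 h2 hne (by norm_num : (0:ℝ) < 1/2) (by norm_num : (0:ℝ) < 1/2)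
        (by norm_num)
      simp only [smul_eq_mul] at h
      have e1 : (1/2:ℝ) * p0.1 + (1/2) * p0.2 = (p0.1 + p0.2) / 2 := by ring
      rw [e1] at h
      simp only [hgdef]
      linarith
    · have := hmin (⟨⟨hx, hy⟩, hxy⟩ : (x, y) ∈ S)
      simp only [hgdef, Set.mem_setOf_eq] at this ⊢
      linarith

theorem statement4' {Ω : Type*} [MeasurableSpace Ω] (μ : Measure Ω) [IsProbabilityMeasure μ]
    (X Y : ℕ → Ω → ℝ) (U : ℝ → ℝ) (ustar : ℝ)
    (hXmeas : ∀ k, AEMeasurable (X k) μ) (hYmeas : ∀ k, AEMeasurable (Y k) μ)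
    (hXpos : ∀ k ω, 0 < X k ω) (hYpos : ∀ k ω, 0 < Y k ω)
    (hXb : ∀ δ : ℝ, 0 < δ → ∃ M : ℝ, ∀ k, (μ {ω | M < |X k ω|}).toReal ≤ δ)
    (hYb : ∀ δ : ℝ, 0 < δ → ∃ M : ℝ, ∀ k, (μ {ω | M < |Y k ω|}).toReal ≤ δ)
    (hXinv : ∀ δ : ℝ, 0 < δ → ∃ M : ℝ, ∀ k, (μ {ω | M < |(X k ω)⁻¹|}).toReal ≤ δ)
    (hYinv : ∀ δ : ℝ, 0 < δ → ∃ M : ℝ, ∀ k, (μ {ω | M < |(Y k ω)⁻¹|}).toReal ≤ δ)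
    (hU : StrictConcaveOn ℝ (Ioi (0 : ℝ)) U)
    (hIX : ∀ k, Integrable (fun ω => U (X k ω)) μ)
    (hIY : ∀ k, Integrable (fun ω => U (Y k ω)) μ)
    (hIM : ∀ k, Integrable (fun ω => U ((X k ω + Y k ω) / 2)) μ)
    (hmid : ∀ k, ∫ ω, U ((X k ω + Y k ω) / 2) ∂μ ≤ ustar)
    (hX : Tendsto (fun k => ∫ ω, U (X k ω) ∂μ) atTop (𝓝 ustar))
    (hY : Tendsto (fun k => ∫ ω, U (Y k ω) ∂μ) atTop (𝓝 ustar)) :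
    TendstoInMeasure μ (fun k ω => |X k ω - Y k ω|) atTop (fun _ => (0 : ℝ)) := by
  rw [tendstoInMeasure_iff_dist]
  intro ε hε
  rw [ENNReal.tendsto_atTop_zero]
  intro d hd
  set δ : ℝ := (min d 1).toReal with hδdef
  have hd1 : min d 1 ≠ 0 := (lt_min hd zero_lt_one).ne'
  have hd2 : min d 1 ≠ ⊤ := ne_top_of_le_ne_top (by simp) (min_le_right d 1)
  have hδpos : 0 < δ := ENNReal.toReal_pos hd1 hd2
  obtain ⟨M₁, hM₁⟩ := hXb (δ/8) (by linarith)
  obtain ⟨M₂, hM₂⟩ := hYb (δ/8) (by linarith)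
  obtain ⟨M₃, hM₃⟩ := hXinv (δ/8) (by linarith)
  obtain ⟨M₄, hM₄⟩ := hYinv (δ/8) (by linarith)
  set M : ℝ := max 1 (max (max M₁ M₂) (max M₃ M₄)) with hMdef
  have hM0 : (0:ℝ) < M := lt_of_lt_of_le one_pos (le_max_left _ _)
  have hMM₁ : M₁ ≤ M := le_trans (le_trans (le_max_left _ _) (le_max_left _ _)) (le_max_right _ _)
  have hMM₂ : M₂ ≤ M := le_trans (le_trans (le_max_right _ _) (le_max_left _ _)) (le_max_right _ _)
  have hMM₃ : M₃ ≤ M := le_trans (le_trans (le_max_left _ _) (le_max_right _ _)) (le_max_right _ _)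
  have hMM₄ : M₄ ≤ M := le_trans (le_trans (le_max_right _ _) (le_max_right _ _)) (le_max_right _ _)
  obtain ⟨η, hη, hgap⟩ := gap_aux hU (inv_pos.2 hM0) hε
  have htend : Tendsto (fun k => ustar - (∫ ω, U (X k ω) ∂μ + ∫ ω, U (Y k ω) ∂μ)/2)
      atTop (𝓝 0) := by
    have h1 : Tendsto (fun k => (∫ ω, U (X k ω) ∂μ + ∫ ω, U (Y k ω) ∂μ)/2) atTop
        (𝓝 ((ustar + ustar)/2)) := (hX.add hY).div_const 2
    have h2 := (tendsto_const_nhds : Tendsto (fun _ : ℕ => ustar) atTop (𝓝 ustar)).sub h1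
    have e : ustar - (ustar + ustar)/2 = 0 := by ring
    rwa [e] at h2
  have hev : ∀ᶠ k in atTop,
      ustar - (∫ ω, U (X k ω) ∂μ + ∫ ω, U (Y k ω) ∂μ)/2 < η * (δ/2) :=
    htend.eventually_lt_const (by positivity)
  rw [eventually_atTop] at hev
  obtain ⟨N, hN⟩ := hev
  refine ⟨N, fun k hk => ?_⟩
  -- the concavity-gap function
  set f : Ω → ℝ := fun ω => U ((X k ω + Y k ω)/2) - (U (X k ω) + U (Y k ω))/2 with hfdef
  have hf_nonneg : ∀ ω, 0 ≤ f ω := fun ω => by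
    have := mid_le_of_concave hU.concaveOn (hXpos k ω) (hYpos k ω)
    simp only [hfdef]; linarith
  have hf_int : Integrable f μ := (hIM k).sub (((hIX k).add (hIY k)).div_const 2)
  have hint2 : Integrable (fun ω => (U (X k ω) + U (Y k ω))/2) μ :=
    ((hIX k).add (hIY k)).div_const 2
  have hf_integral : ∫ ω, f ω ∂μ ≤ η * (δ/2) := by
    have e1 : ∫ ω, f ω ∂μ
        = ∫ ω, U ((X k ω + Y k ω)/2) ∂μ - (∫ ω, U (X k ω) ∂μ + ∫ ω, U (Y k ω) ∂μ)/2 := by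
      simp only [hfdef]
      rw [integral_sub (hIM k) hint2, integral_div, integral_add (hIX k) (hIY k)]
    rw [e1]
    have h2 := hmid k
    have h3 := hN k hk
    linarith
  have hmarkov : (μ {ω | η ≤ f ω}).toReal ≤ δ/2 := by
    have h := mul_meas_ge_le_integral_of_nonneg
      (Filter.Eventually.of_forall hf_nonneg) hf_int η
    have := le_trans h hf_integral
    change η * (μ {ω | η ≤ f ω}).toReal ≤ η * (δ / 2) at this
    nlinarith [ENNReal.toReal_nonneg (a := μ {ω | η ≤ f ω})]
  -- set inclusion
  have hsub : {ω | ε ≤ dist (|X k ω - Y k ω|) 0}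
      ⊆ {ω | η ≤ f ω} ∪ ({ω | M₁ < |X k ω|} ∪ ({ω | M₂ < |Y k ω|}
        ∪ ({ω | M₃ < |(X k ω)⁻¹|} ∪ {ω | M₄ < |(Y k ω)⁻¹|}))) := by
    intro ω hω
    simp only [Real.dist_eq, sub_zero, abs_abs, Set.mem_setOf_eq] at hω
    by_cases hx : X k ω ∈ Icc M⁻¹ M
    · by_cases hy : Y k ω ∈ Icc M⁻¹ M
      · left
        have := hgap (X k ω) (Y k ω) hx hy hω
        simp only [Set.mem_setOf_eq, hfdef]; linarith
      · right; right
        rw [Set.mem_Icc, not_and_or, not_le, not_le] at hy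
        rcases hy with hy | hy
        · right; right
          have h1 : M < (Y k ω)⁻¹ := (lt_inv_comm₀ (hYpos k ω) hM0).mp hy
          exact lt_of_le_of_lt hMM₄ (lt_of_lt_of_le h1 (le_abs_self _))
        · left
          exact lt_of_le_of_lt hMM₂ (lt_of_lt_of_le hy (le_abs_self _))
    · right
      rw [Set.mem_Icc, not_and_or, not_le, not_le] at hx
      rcases hx with hx | hx
      · right; right; left
        have h1 : M < (X k ω)⁻¹ := (lt_inv_comm₀ (hXpos k ω) hM0).mp hx
        exact lt_of_le_of_lt hMM₃ (lt_of_lt_of_le h1 (le_abs_self _))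
      · left
        exact lt_of_le_of_lt hMM₁ (lt_of_lt_of_le hx (le_abs_self _))
  -- measure arithmetic
  have hA : μ {ω | η ≤ f ω} ≤ ENNReal.ofReal (δ/2) :=
    (ENNReal.le_ofReal_iff_toReal_le (measure_ne_top μ _) (by linarith)).2 hmarkov
  have hB : μ {ω | M₁ < |X k ω|} ≤ ENNReal.ofReal (δ/8) :=
    (ENNReal.le_ofReal_iff_toReal_le (measure_ne_top μ _) (by linarith)).2 (hM₁ k)
  have hC : μ {ω | M₂ < |Y k ω|} ≤ ENNReal.ofReal (δ/8) :=
    (ENNReal.le_ofReal_iff_toReal_le (measure_ne_top μ _) (by linarith)).2 (hM₂ k)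
  have hD : μ {ω | M₃ < |(X k ω)⁻¹|} ≤ ENNReal.ofReal (δ/8) :=
    (ENNReal.le_ofReal_iff_toReal_le (measure_ne_top μ _) (by linarith)).2 (hM₃ k)
  have hE : μ {ω | M₄ < |(Y k ω)⁻¹|} ≤ ENNReal.ofReal (δ/8) :=
    (ENNReal.le_ofReal_iff_toReal_le (measure_ne_top μ _) (by linarith)).2 (hM₄ k)
  calc μ {ω | ε ≤ dist (|X k ω - Y k ω|) 0}
      ≤ μ ({ω | η ≤ f ω} ∪ ({ω | M₁ < |X k ω|} ∪ ({ω | M₂ < |Y k ω|}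
        ∪ ({ω | M₃ < |(X k ω)⁻¹|} ∪ {ω | M₄ < |(Y k ω)⁻¹|})))) := measure_mono hsub
    _ ≤ μ {ω | η ≤ f ω} + (μ {ω | M₁ < |X k ω|} + (μ {ω | M₂ < |Y k ω|}
        + (μ {ω | M₃ < |(X k ω)⁻¹|} + μ {ω | M₄ < |(Y k ω)⁻¹|}))) := by
        refine le_trans (measure_union_le _ _) (add_le_add le_rfl ?_)
        refine le_trans (measure_union_le _ _) (add_le_add le_rfl ?_)
        refine le_trans (measure_union_le _ _) (add_le_add le_rfl ?_)
        exact measure_union_le _ _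
    _ ≤ ENNReal.ofReal (δ/2) + (ENNReal.ofReal (δ/8) + (ENNReal.ofReal (δ/8)
        + (ENNReal.ofReal (δ/8) + ENNReal.ofReal (δ/8)))) := by
        gcongr
    _ = ENNReal.ofReal δ := by
        rw [← ENNReal.ofReal_add (by linarith) (by linarith),
          ← ENNReal.ofReal_add (by linarith) (by linarith),
          ← ENNReal.ofReal_add (by linarith) (by linarith),
          ← ENNReal.ofReal_add (by linarith) (by linarith)]
        congr 1; ring
    _ = min d 1 := ENNReal.ofReal_toReal hd2
    _ ≤ d := min_le_left _ _

/-- two optimizing sequences for a strictly concave utility merge in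
probability, provided they and their reciprocals are bounded in probability. -/
theorem statement4 {Ω : Type*} [MeasurableSpace Ω] (μ : Measure Ω) [IsProbabilityMeasure μ]
    (X Y : ℕ → Ω → ℝ) (U : ℝ → ℝ) (ustar : ℝ)
    (hXmeas : ∀ k, AEMeasurable (X k) μ) (hYmeas : ∀ k, AEMeasurable (Y k) μ)
    (hXpos : ∀ k ω, 0 < X k ω) (hYpos : ∀ k ω, 0 < Y k ω)
    (hXb : BddInProb μ X) (hYb : BddInProb μ Y)
    (hXinv : BddInProb μ fun k ω => (X k ω)⁻¹)
    (hYinv : BddInProb μ fun k ω => (Y k ω)⁻¹)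
    (hU : StrictConcaveOn ℝ (Ioi (0 : ℝ)) U)
    (hIX : ∀ k, Integrable (fun ω => U (X k ω)) μ)
    (hIY : ∀ k, Integrable (fun ω => U (Y k ω)) μ)
    (hIM : ∀ k, Integrable (fun ω => U ((X k ω + Y k ω) / 2)) μ)
    (hmid : ∀ k, ∫ ω, U ((X k ω + Y k ω) / 2) ∂μ ≤ ustar)
    (hX : Tendsto (fun k => ∫ ω, U (X k ω) ∂μ) atTop (𝓝 ustar))
    (hY : Tendsto (fun k => ∫ ω, U (Y k ω) ∂μ) atTop (𝓝 ustar)) :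
    TendstoInMeasure μ (fun k ω => |X k ω - Y k ω|) atTop (fun _ => (0 : ℝ)) := by
  exact statement4' μ X Y U ustar hXmeas hYmeas hXpos hYpos hXb hYb hXinv hYinv hU
    hIX hIY hIM hmid hX hY
end

section
/- Let $U:(0,\infty) \to \mathbb{R}$ be increasing and concave, extended by $U(0) := \lim_{x \downarrow 0} U(x) \in [-\infty, \infty)$. Let $u_s(x) := \sup_{X \in \mathcal{X}_s(x)} \mathbb{E}[U(X_T)]$ and $u(x) := \sup_{X \in \mathcal{X}(x)} \mathbb{E}[U(X_T)]$ where $\mathcal{X}_s(x) \subseteq \mathcal{X}(x)$. Assume: (i) $u$ is continuous on $(0,\infty)$ (e.g., finite and concave); (ii) for every $x > 0$, $\epsilon \in (0,x)$, and $X \in \mathcal{X}(x)$ with $X \geq \epsilon$, there exists a sequence $X^k \in \mathcal{X}_s(x)$ with $X^k_T \geq \epsilon$ and $X^k_T \to X_T$ in probability; (iii) $\xi \in \mathcal{X}(x-\epsilon)$ implies $\epsilon + \xi \in \mathcal{X}(x)$. Then $u_s(x) = u(x)$ for all $x > 0$. -/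
open MeasureTheory Filter Set
open scoped Topology ENNReal

/-- if wealths attainable by simple trading are dense (in the sense (ii)) in
all attainable wealths, then the two indirect utilities coincide: `u_s = u` on `(0,∞)`. -/
theorem statement13
    {Ω : Type*} [MeasurableSpace Ω] (μ : Measure Ω) [IsProbabilityMeasure μ]
    (U : ℝ → ℝ) (hUconc : ConcaveOn ℝ (Ici (0 : ℝ)) U) (hUmono : MonotoneOn U (Ici (0 : ℝ)))
    (𝒳s 𝒳 : ℝ → Set (Ω → ℝ))
    (hsub : ∀ x, 𝒳s x ⊆ 𝒳 x)
    (hnn : ∀ x : ℝ, ∀ X ∈ 𝒳 x, ∀ᵐ ω ∂μ, 0 ≤ X ω)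
    (us u : ℝ → ℝ≥0∞)
    (hus : ∀ x : ℝ, us x = ⨆ X ∈ 𝒳s x, ∫⁻ ω, ENNReal.ofReal (U (X ω) - U 0) ∂μ)
    (hu : ∀ x : ℝ, u x = ⨆ X ∈ 𝒳 x, ∫⁻ ω, ENNReal.ofReal (U (X ω) - U 0) ∂μ)
    -- (i) continuity of the indirect utility
    (hcont : ContinuousOn u (Ioi (0 : ℝ)))
    -- (ii) density of simply-attainable wealths
    (happrox : ∀ x ε : ℝ, 0 < ε → ε < x → ∀ X ∈ 𝒳 x, (∀ᵐ ω ∂μ, ε ≤ X ω) →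
      ∃ Xk : ℕ → Ω → ℝ, (∀ k, Xk k ∈ 𝒳s x) ∧ (∀ k, ∀ᵐ ω ∂μ, ε ≤ Xk k ω) ∧
        TendstoInMeasure μ Xk atTop X)
    -- (iii) shifting wealth by holding extra cash
    (hshift : ∀ x ε : ℝ, 0 < ε → ε < x → ∀ ξ ∈ 𝒳 (x - ε), (fun ω => ε + ξ ω) ∈ 𝒳 x) :
    ∀ x : ℝ, 0 < x → us x = u x := by
  intro x hx
  -- key step: for every `ε ∈ (0, x)`, `u (x - ε) ≤ us x`
  have key : ∀ ε : ℝ, 0 < ε → ε < x → u (x - ε) ≤ us x := by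
    intro ε hε hεx
    rw [hu]
    refine iSup₂_le fun ξ hξ => ?_
    have hξ0 : ∀ᵐ ω ∂μ, 0 ≤ ξ ω := hnn _ ξ hξ
    have hX : (fun ω => ε + ξ ω) ∈ 𝒳 x := hshift x ε hε hεx ξ hξ
    have hXε : ∀ᵐ ω ∂μ, ε ≤ ε + ξ ω := hξ0.mono fun ω h => by linarith
    obtain ⟨Xk, hXk, hXkε, hXkconv⟩ := happrox x ε hε hεx _ hX hXε
    show lintegral μ (fun ω => ENNReal.ofReal (U (ξ ω) - U 0)) ≤ us x
    rw [lintegral_def]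
    refine iSup₂_le fun φ hφ => ?_
    set c : ℝ≥0∞ := φ.range.sup id with hc_def
    have hφc : ∀ ω, φ ω ≤ c := fun ω => Finset.le_sup (f := id) (φ.mem_range_self ω)
    have hc : c ≠ ⊤ := by
      rw [hc_def, Ne, Finset.sup_eq_top_iff]
      rintro ⟨b, hb, hb'⟩
      obtain ⟨ω, rfl⟩ := MeasureTheory.SimpleFunc.mem_range.mp hb
      exact (lt_of_le_of_lt (hφ ω) ENNReal.ofReal_lt_top).ne hb'
    have hk : ∀ k, φ.lintegral μ ≤
        us x + c * μ {ω | ε ≤ dist (Xk k ω) (ε + ξ ω)} := by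
      intro k
      set B : Set Ω := toMeasurable μ {ω | ε ≤ dist (Xk k ω) (ε + ξ ω)} with hB_def
      have hBm : MeasurableSet B := measurableSet_toMeasurable _ _
      have hae : ∀ᵐ ω ∂μ, φ ω ≤
          ENNReal.ofReal (U (Xk k ω) - U 0) + B.indicator (fun _ => c) ω := by
        filter_upwards [hξ0, hXkε k] with ω h0 hε'
        by_cases hω : ω ∈ B
        · rw [Set.indicator_of_mem hω]
          exact le_add_left (hφc ω)
        · rw [Set.indicator_of_notMem hω, add_zero]
          have hω' : ¬ ε ≤ dist (Xk k ω) (ε + ξ ω) :=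
            fun h => hω (subset_toMeasurable μ _ h)
          push_neg at hω'
          rw [Real.dist_eq] at hω'
          have hξX : ξ ω ≤ Xk k ω := by
            rcases abs_lt.mp hω' with ⟨h1, h2⟩
            linarith
          refine le_trans (hφ ω) (ENNReal.ofReal_le_ofReal ?_)
          have := hUmono h0 (le_trans h0 hξX) hξX
          linarith
      calc φ.lintegral μ = ∫⁻ ω, φ ω ∂μ := (φ.lintegral_eq_lintegral μ).symm
        _ ≤ ∫⁻ ω, ENNReal.ofReal (U (Xk k ω) - U 0) + B.indicator (fun _ => c) ω ∂μ :=
            lintegral_mono_ae hae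
        _ = (∫⁻ ω, ENNReal.ofReal (U (Xk k ω) - U 0) ∂μ)
              + ∫⁻ ω, B.indicator (fun _ => c) ω ∂μ :=
            lintegral_add_right _ (measurable_const.indicator hBm)
        _ ≤ us x + c * μ {ω | ε ≤ dist (Xk k ω) (ε + ξ ω)} := by
            refine add_le_add ?_ ?_
            · rw [hus]
              exact le_iSup₂_of_le (Xk k) (hXk k) le_rfl
            · rw [lintegral_indicator_const hBm, hB_def, measure_toMeasurable]
    have hlim : Tendsto (fun k => us x + c * μ {ω | ε ≤ dist (Xk k ω) (ε + ξ ω)})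
        atTop (𝓝 (us x)) := by
      have h1 : Tendsto (fun k => c * μ {ω | ε ≤ dist (Xk k ω) (ε + ξ ω)})
          atTop (𝓝 (c * 0)) :=
        ENNReal.Tendsto.const_mul (by
          have h := hXkconv (ENNReal.ofReal ε) (ENNReal.ofReal_pos.mpr hε)
          refine h.congr fun k => ?_
          congr 1
          ext ω
          simp only [Set.mem_setOf_eq, edist_dist, ENNReal.ofReal_le_ofReal_iff dist_nonneg]) (Or.inr hc)
      rw [mul_zero] at h1
      simpa using (tendsto_const_nhds (x := us x) (f := atTop (α := ℕ))).add h1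
    exact ge_of_tendsto' hlim hk
  refine le_antisymm ?_ ?_
  · rw [hus x, hu x]
    exact iSup₂_le fun X hX => le_iSup₂_of_le X (hsub x hX) le_rfl
  · -- use continuity of `u` at `x` along the sequence `x - x/(n+2)`
    have hmem : ∀ n : ℕ, (0 : ℝ) < x / (n + 2) ∧ x / (n + 2) < x := by
      intro n
      constructor
      · positivity
      · rw [div_lt_iff₀ (by positivity)]
        nlinarith [Nat.cast_nonneg (α := ℝ) n]
    have htends : Tendsto (fun n : ℕ => x - x / (n + 2)) atTop (𝓝[Ioi (0:ℝ)] x) := by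
      rw [tendsto_nhdsWithin_iff]
      constructor
      · have h0 : Tendsto (fun n : ℕ => x / (n + 2)) atTop (𝓝 0) := by
          apply Tendsto.div_atTop tendsto_const_nhds
          exact tendsto_atTop_add_const_right _ 2 tendsto_natCast_atTop_atTop
        simpa using tendsto_const_nhds.sub h0
      · exact Filter.Eventually.of_forall fun n => by
          have := hmem n; simp only [Set.mem_Ioi]; linarith [this.1, this.2]
    have hcx : Tendsto (fun n : ℕ => u (x - x / (n + 2))) atTop (𝓝 (u x)) :=
      (hcont x hx).tendsto.comp htends
    exact le_of_tendsto' hcx fun n => key _ (hmem n).1 (hmem n).2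
end

section
/- Let $u : (0,\infty) \to \mathbb{R}$ be finite, concave (hence continuous), and suppose the wealth classes satisfy: $\mathcal{X}(a) + \mathcal{X}(b) \subseteq \mathcal{X}(a+b)$ for all $a, b > 0$. Assume there exist a nonnegative random variable $\xi$ with $\mathbb{P}[\xi > 0] > 0$, and for each $n \in \mathbb{N}$ some $X^n \in \mathcal{X}(1/n)$ with $X^n_T \geq \xi$ a.s. (an arbitrage of the first kind), together with $\bar{X} \in \mathcal{X}(x)$ with $\bar{X}_T > 0$ a.s. and $\mathbb{E}[U(\bar{X}_T)] = u(x)$ for a strictly increasing utility $U$. Then a contradiction follows; that is, existence of a strictly positive optimizer with finite value forces absence of arbitrages of the first kind. -/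
open MeasureTheory Filter Set
open scoped Topology ENNReal

/-- The indirect utility `u(y) = sup_{X ∈ 𝒳(y)} E[U(X_T)]` (in the extended sense, after
normalizing by `U(0)`). -/
noncomputable def indirectU {Ω : Type*} [MeasurableSpace Ω] (μ : Measure Ω) (U : ℝ → ℝ)
    (𝒳 : ℝ → Set (Ω → ℝ)) (y : ℝ) : ℝ≥0∞ :=
  ⨆ X ∈ 𝒳 y, ∫⁻ ω, ENNReal.ofReal (U (X ω) - U 0) ∂μ

/-- a strictly positive optimizer with finite concave value function is
incompatible with the existence of an arbitrage of the first kind. -/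
theorem statement17
    {Ω : Type*} [MeasurableSpace Ω] (μ : Measure Ω) [IsProbabilityMeasure μ]
    (U : ℝ → ℝ) (hUmono : StrictMonoOn U (Ici (0 : ℝ))) (hUmeas : Measurable U)
    (𝒳 : ℝ → Set (Ω → ℝ))
    (hnn : ∀ y : ℝ, ∀ X ∈ 𝒳 y, ∀ ω, 0 ≤ X ω)
    (hadd : ∀ a b : ℝ, ∀ X ∈ 𝒳 a, ∀ Y ∈ 𝒳 b, (fun ω => X ω + Y ω) ∈ 𝒳 (a + b))
    -- `u` is finite and concave on `(0,∞)`
    (hfin : ∀ y : ℝ, 0 < y → indirectU μ U 𝒳 y < ⊤)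
    (hconc : ∀ a b lam : ℝ, 0 < a → 0 < b → 0 ≤ lam → lam ≤ 1 →
      ENNReal.ofReal lam * indirectU μ U 𝒳 a
          + ENNReal.ofReal (1 - lam) * indirectU μ U 𝒳 b
        ≤ indirectU μ U 𝒳 (lam * a + (1 - lam) * b))
    (x : ℝ) (hx : 0 < x)
    -- an arbitrage of the first kind
    (ξ : Ω → ℝ) (hξnn : ∀ ω, 0 ≤ ξ ω) (hξmeas : Measurable ξ)
    (hξpos : 0 < μ {ω | 0 < ξ ω})
    (Xn : ℕ → Ω → ℝ) (hXn : ∀ n : ℕ, Xn n ∈ 𝒳 (1 / (n + 1)))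
    (hXnξ : ∀ n : ℕ, ∀ᵐ ω ∂μ, ξ ω ≤ Xn n ω)
    -- a strictly positive optimizer at `x`
    (Xb : Ω → ℝ) (hXb : Xb ∈ 𝒳 x) (hXbmeas : Measurable Xb) (hXbpos : ∀ᵐ ω ∂μ, 0 < Xb ω)
    (hopt : ∫⁻ ω, ENNReal.ofReal (U (Xb ω) - U 0) ∂μ = indirectU μ U 𝒳 x) :
    False := by
  classical
  have hUmono' : MonotoneOn U (Ici (0 : ℝ)) := hUmono.monotoneOn
  have hXbnn : ∀ ω, 0 ≤ Xb ω := hnn x Xb hXb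
  set v : ℝ → ℝ≥0∞ := indirectU μ U 𝒳 with hvdef
  set J : ℝ≥0∞ := ∫⁻ ω, ENNReal.ofReal (U (Xb ω + ξ ω) - U 0) ∂μ with hJdef
  -- pointwise splitting
  have hpt : ∀ ω, ENNReal.ofReal (U (Xb ω + ξ ω) - U 0)
      = ENNReal.ofReal (U (Xb ω) - U 0)
        + ENNReal.ofReal (U (Xb ω + ξ ω) - U (Xb ω)) := by
    intro ω
    have h1 : (0 : ℝ) ≤ U (Xb ω) - U 0 :=
      sub_nonneg.2 (hUmono' (mem_Ici.2 le_rfl) (mem_Ici.2 (hXbnn ω)) (hXbnn ω))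
    have h2 : (0 : ℝ) ≤ U (Xb ω + ξ ω) - U (Xb ω) :=
      sub_nonneg.2 (hUmono' (mem_Ici.2 (hXbnn ω))
        (mem_Ici.2 (add_nonneg (hXbnn ω) (hξnn ω)))
        (le_add_of_nonneg_right (hξnn ω)))
    rw [← ENNReal.ofReal_add h1 h2]
    congr 1; ring
  have hmeas1 : Measurable fun ω => ENNReal.ofReal (U (Xb ω) - U 0) :=
    ((hUmeas.comp hXbmeas).sub measurable_const).ennreal_ofReal
  have hmeas2 : Measurable fun ω => ENNReal.ofReal (U (Xb ω + ξ ω) - U (Xb ω)) :=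
    ((hUmeas.comp (hXbmeas.add hξmeas)).sub (hUmeas.comp hXbmeas)).ennreal_ofReal
  have hsplit : J = v x + ∫⁻ ω, ENNReal.ofReal (U (Xb ω + ξ ω) - U (Xb ω)) ∂μ := by
    rw [hJdef, ← hopt]
    calc ∫⁻ ω, ENNReal.ofReal (U (Xb ω + ξ ω) - U 0) ∂μ
        = ∫⁻ ω, (ENNReal.ofReal (U (Xb ω) - U 0)
            + ENNReal.ofReal (U (Xb ω + ξ ω) - U (Xb ω))) ∂μ := by
          exact lintegral_congr hpt
      _ = _ := lintegral_add_left hmeas1 _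
  have hpos : 0 < ∫⁻ ω, ENNReal.ofReal (U (Xb ω + ξ ω) - U (Xb ω)) ∂μ := by
    rw [lintegral_pos_iff_support hmeas2]
    refine lt_of_lt_of_le hξpos (measure_mono_ae ?_)
    filter_upwards [hXbpos] with ω hω hmem
    have hlt : U (Xb ω) < U (Xb ω + ξ ω) :=
      hUmono (mem_Ici.2 (hXbnn ω)) (mem_Ici.2 (add_nonneg (hXbnn ω) (hξnn ω)))
        (lt_add_of_pos_right _ hmem)
    exact Function.mem_support.2 (ENNReal.ofReal_pos.2 (sub_pos.2 hlt)).ne'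
  have hvxJ : v x < J := by
    rw [hsplit]
    exact ENNReal.lt_add_right (hfin x hx).ne hpos.ne'
  -- J ≤ v (x + 1/(n+1))
  have hJle : ∀ n : ℕ, J ≤ v (x + 1 / (n + 1)) := by
    intro n
    have hmem : (fun ω => Xb ω + Xn n ω) ∈ 𝒳 (x + 1 / (n + 1)) :=
      hadd x (1 / (n + 1)) Xb hXb (Xn n) (hXn n)
    have h1 : J ≤ ∫⁻ ω, ENNReal.ofReal (U (Xb ω + Xn n ω) - U 0) ∂μ := by
      refine lintegral_mono_ae ?_
      filter_upwards [hXnξ n] with ω hω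
      refine ENNReal.ofReal_le_ofReal ?_
      have hXnnn : 0 ≤ Xn n ω := hnn _ (Xn n) (hXn n) ω
      have := hUmono' (mem_Ici.2 (add_nonneg (hXbnn ω) (hξnn ω)))
        (mem_Ici.2 (add_nonneg (hXbnn ω) hXnnn))
        (add_le_add_right hω _)
      linarith
    refine h1.trans ?_
    rw [hvdef]
    exact le_iSup₂ (f := fun X (_ : X ∈ 𝒳 (x + 1 / (n + 1))) =>
      ∫⁻ ω, ENNReal.ofReal (U (X ω) - U 0) ∂μ) _ hmem
  -- the mixing weights
  set lam : ℕ → ℝ := fun n => (1 / ((n : ℝ) + 1)) / (x / 2 + 1 / ((n : ℝ) + 1)) with hlam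
  have hden : ∀ n : ℕ, (0 : ℝ) < x / 2 + 1 / ((n : ℝ) + 1) := by
    intro n; positivity
  have hlam0 : ∀ n : ℕ, 0 ≤ lam n := by intro n; positivity
  have hlam1 : ∀ n : ℕ, lam n ≤ 1 := by
    intro n
    rw [hlam, div_le_one (hden n)]
    nlinarith [hx]
  have key : ∀ n : ℕ, ENNReal.ofReal (1 - lam n) * J ≤ v x := by
    intro n
    have hb : (0 : ℝ) < x + 1 / ((n : ℝ) + 1) := by positivity
    have hc := hconc (x / 2) (x + 1 / ((n : ℝ) + 1)) (lam n) (by positivity) hb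
      (hlam0 n) (hlam1 n)
    have harith : lam n * (x / 2) + (1 - lam n) * (x + 1 / ((n : ℝ) + 1)) = x := by
      rw [hlam]
      field_simp
      ring
    rw [harith] at hc
    calc ENNReal.ofReal (1 - lam n) * J
        ≤ ENNReal.ofReal (1 - lam n) * v (x + 1 / ((n : ℝ) + 1)) :=
          mul_le_mul_right (hJle n) _
      _ ≤ ENNReal.ofReal (lam n) * v (x / 2)
            + ENNReal.ofReal (1 - lam n) * v (x + 1 / ((n : ℝ) + 1)) := le_add_self
      _ ≤ v x := hc
  -- pass to real numbers
  have hJtop : J ≠ ⊤ := by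
    refine ((hJle 0).trans_lt ?_).ne
    exact hfin _ (by positivity)
  have hvtop : v x ≠ ⊤ := (hfin x hx).ne
  set Vr : ℝ := (v x).toReal with hVr
  set Jr : ℝ := J.toReal with hJr
  have hVJ : Vr < Jr := (ENNReal.toReal_lt_toReal hvtop hJtop).2 hvxJ
  have hineq : ∀ n : ℕ, (1 - lam n) * Jr ≤ Vr := by
    intro n
    have h2 : ((ENNReal.ofReal (1 - lam n)) * J).toReal = (1 - lam n) * Jr := by
      rw [ENNReal.toReal_mul, ENNReal.toReal_ofReal (sub_nonneg.2 (hlam1 n))]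
    rw [← h2]
    exact ENNReal.toReal_mono hvtop (key n)
  have he : Tendsto (fun n : ℕ => 1 / ((n : ℝ) + 1)) atTop (𝓝 0) :=
    tendsto_one_div_add_atTop_nhds_zero_nat
  have hlamlim : Tendsto lam atTop (𝓝 0) := by
    have hd : Tendsto (fun n : ℕ => x / 2 + 1 / ((n : ℝ) + 1)) atTop (𝓝 (x / 2 + 0)) :=
      tendsto_const_nhds.add he
    have h := he.div hd (by simpa using (by linarith : x / 2 + 0 ≠ 0))
    have h' : Tendsto (fun n : ℕ => (1 / ((n : ℝ) + 1)) / (x / 2 + 1 / ((n : ℝ) + 1)))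
        atTop (𝓝 ((0 : ℝ) / (x / 2 + 0))) := h
    simpa [hlam, one_div] using h'
  have hlim : Tendsto (fun n : ℕ => (1 - lam n) * Jr) atTop (𝓝 ((1 - 0) * Jr)) :=
    (tendsto_const_nhds.sub hlamlim).mul tendsto_const_nhds
  have : Jr ≤ Vr := by
    have := le_of_tendsto' hlim hineq
    simpa using this
  linarith
end
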